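/- arXiv:1506.03017 — 2 statements merged into one kernel-verified Lean document; each statement's English description precedes it below -/
import Mathlib

section
/- For integers i > j > 0, the set Γ_x of matrices of the form [[±1, u, w], [0, ±1, v], [0, 0, ±1]] with u, v, w ∈ Z[t], deg(u) ≤ i−j, deg(v) ≤ j, deg(w) ≤ i, and determinant 1, is a subgroup of SL_3(Z[t]). -/
open Matrix Polynomial

private lemma degMulLeL {p q : Polynomial ℤ} {n : ℕ} (hp : p = 1 ∨ p = -1)
    (hq : q.degree ≤ (n : WithBot ℕ)) : (p * q).degree ≤ (n : WithBot ℕ) := by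
  rcases hp with h | h <;> simp [h, hq]

private lemma degMulLeR {p q : Polynomial ℤ} {n : ℕ} (hq : q = 1 ∨ q = -1)
    (hp : p.degree ≤ (n : WithBot ℕ)) : (p * q).degree ≤ (n : WithBot ℕ) := by
  rcases hq with h | h <;> simp [h, hp]

/-- for integers `i > j > 0`, the set of matrices
`[[±1, u, w], [0, ±1, v], [0, 0, ±1]]` in `SL₃(ℤ[t])` with
`deg u ≤ i - j`, `deg v ≤ j`, `deg w ≤ i` is a subgroup. -/
theorem stmt2 (i j : ℕ) (hj : 0 < j) (hij : j < i) :
    ∃ H : Subgroup (Matrix.SpecialLinearGroup (Fin 3) (Polynomial ℤ)),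
      (H : Set (Matrix.SpecialLinearGroup (Fin 3) (Polynomial ℤ))) =
        {A : Matrix.SpecialLinearGroup (Fin 3) (Polynomial ℤ) |
             ((A : Matrix (Fin 3) (Fin 3) (Polynomial ℤ)) 1 0 = 0 ∧
              (A : Matrix (Fin 3) (Fin 3) (Polynomial ℤ)) 2 0 = 0 ∧
              (A : Matrix (Fin 3) (Fin 3) (Polynomial ℤ)) 2 1 = 0) ∧
             (∀ k : Fin 3, (A : Matrix (Fin 3) (Fin 3) (Polynomial ℤ)) k k = 1 ∨
                (A : Matrix (Fin 3) (Fin 3) (Polynomial ℤ)) k k = -1) ∧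
             ((A : Matrix (Fin 3) (Fin 3) (Polynomial ℤ)) 0 1).degree ≤ (i - j : ℕ) ∧
             ((A : Matrix (Fin 3) (Fin 3) (Polynomial ℤ)) 1 2).degree ≤ (j : ℕ) ∧
             ((A : Matrix (Fin 3) (Fin 3) (Polynomial ℤ)) 0 2).degree ≤ (i : ℕ)} := by
  have hsum : ((i - j : ℕ) : WithBot ℕ) + (j : ℕ) = (i : ℕ) := by
    rw [← Nat.cast_add, Nat.sub_add_cancel hij.le]
  refine ⟨Subgroup.mk (Submonoid.mk (Subsemigroup.mk
      {A : Matrix.SpecialLinearGroup (Fin 3) (Polynomial ℤ) |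
             ((A : Matrix (Fin 3) (Fin 3) (Polynomial ℤ)) 1 0 = 0 ∧
              (A : Matrix (Fin 3) (Fin 3) (Polynomial ℤ)) 2 0 = 0 ∧
              (A : Matrix (Fin 3) (Fin 3) (Polynomial ℤ)) 2 1 = 0) ∧
             (∀ k : Fin 3, (A : Matrix (Fin 3) (Fin 3) (Polynomial ℤ)) k k = 1 ∨
                (A : Matrix (Fin 3) (Fin 3) (Polynomial ℤ)) k k = -1) ∧
             ((A : Matrix (Fin 3) (Fin 3) (Polynomial ℤ)) 0 1).degree ≤ (i - j : ℕ) ∧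
             ((A : Matrix (Fin 3) (Fin 3) (Polynomial ℤ)) 1 2).degree ≤ (j : ℕ) ∧
             ((A : Matrix (Fin 3) (Fin 3) (Polynomial ℤ)) 0 2).degree ≤ (i : ℕ)}
      ?mul) ?one) ?inv, rfl⟩
  case one =>
    refine ⟨⟨?_, ?_, ?_⟩, ?_, ?_, ?_, ?_⟩ <;>
      simp [Matrix.SpecialLinearGroup.coe_one, Matrix.one_apply]
  case mul =>
    rintro A B ⟨⟨hA10, hA20, hA21⟩, hAd, hAu, hAv, hAw⟩
      ⟨⟨hB10, hB20, hB21⟩, hBd, hBu, hBv, hBw⟩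
    have e : ∀ a b : Fin 3,
        ((A * B : Matrix.SpecialLinearGroup (Fin 3) (Polynomial ℤ)) :
          Matrix (Fin 3) (Fin 3) (Polynomial ℤ)) a b =
        (A : Matrix (Fin 3) (Fin 3) (Polynomial ℤ)) a 0 *
          (B : Matrix (Fin 3) (Fin 3) (Polynomial ℤ)) 0 b +
        (A : Matrix (Fin 3) (Fin 3) (Polynomial ℤ)) a 1 *
          (B : Matrix (Fin 3) (Fin 3) (Polynomial ℤ)) 1 b +
        (A : Matrix (Fin 3) (Fin 3) (Polynomial ℤ)) a 2 *
          (B : Matrix (Fin 3) (Fin 3) (Polynomial ℤ)) 2 b := by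
      intro a b
      simp [Matrix.SpecialLinearGroup.coe_mul, Matrix.mul_apply, Fin.sum_univ_three]
    refine ⟨⟨?_, ?_, ?_⟩, ?_, ?_, ?_, ?_⟩
    · rw [e]; simp [hA10, hB10, hB20]
    · rw [e]; simp [hA20, hA21, hB10, hB20]
    · rw [e]; simp [hA20, hA21, hB21]
    · intro k
      fin_cases k
      · rw [e]; simp only [hB10, hB20, mul_zero, add_zero]
        rcases hAd 0 with h | h <;> rcases hBd 0 with h' | h' <;>
          simp_all
      · rw [e]; simp only [hA10, hB21, zero_mul, mul_zero, zero_add, add_zero]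
        rcases hAd 1 with h | h <;> rcases hBd 1 with h' | h' <;>
          simp_all
      · rw [e]; simp only [hA20, hA21, zero_mul, zero_add]
        rcases hAd 2 with h | h <;> rcases hBd 2 with h' | h' <;>
          simp_all
    · rw [e]; simp only [hB21, mul_zero, add_zero]
      exact le_trans (degree_add_le _ _)
        (max_le (degMulLeL (hAd 0) hBu) (degMulLeR (hBd 1) hAu))
    · rw [e]; simp only [hA10, zero_mul, zero_add]
      exact le_trans (degree_add_le _ _)
        (max_le (degMulLeL (hAd 1) hBv) (degMulLeR (hBd 2) hAv))
    · rw [e]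
      refine le_trans (degree_add_le _ _) (max_le (le_trans (degree_add_le _ _)
        (max_le (degMulLeL (hAd 0) hBw) ?_)) (degMulLeR (hBd 2) hAw))
      calc ((A : Matrix (Fin 3) (Fin 3) (Polynomial ℤ)) 0 1 *
              (B : Matrix (Fin 3) (Fin 3) (Polynomial ℤ)) 1 2).degree
          ≤ _ + _ := degree_mul_le _ _
        _ ≤ ((i - j : ℕ) : WithBot ℕ) + (j : ℕ) := add_le_add hAu hBv
        _ = (i : ℕ) := hsum
  case inv =>
    rintro A ⟨⟨hA10, hA20, hA21⟩, hAd, hAu, hAv, hAw⟩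
    have e : ((A⁻¹ : Matrix.SpecialLinearGroup (Fin 3) (Polynomial ℤ)) :
        Matrix (Fin 3) (Fin 3) (Polynomial ℤ)) =
        adjugate (A : Matrix (Fin 3) (Fin 3) (Polynomial ℤ)) :=
      Matrix.SpecialLinearGroup.coe_inv A
    set M := (A : Matrix (Fin 3) (Fin 3) (Polynomial ℤ)) with hM
    have h00 : M.adjugate 0 0 = M 1 1 * M 2 2 - M 1 2 * M 2 1 := by
      rw [adjugate_fin_three]; rfl
    have h01 : M.adjugate 0 1 = -(M 0 1 * M 2 2) + M 0 2 * M 2 1 := by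
      rw [adjugate_fin_three]; rfl
    have h02 : M.adjugate 0 2 = M 0 1 * M 1 2 - M 0 2 * M 1 1 := by
      rw [adjugate_fin_three]; rfl
    have h10 : M.adjugate 1 0 = -(M 1 0 * M 2 2) + M 1 2 * M 2 0 := by
      rw [adjugate_fin_three]; rfl
    have h11 : M.adjugate 1 1 = M 0 0 * M 2 2 - M 0 2 * M 2 0 := by
      rw [adjugate_fin_three]; rfl
    have h12 : M.adjugate 1 2 = -(M 0 0 * M 1 2) + M 0 2 * M 1 0 := by
      rw [adjugate_fin_three]; rfl
    have h20 : M.adjugate 2 0 = M 1 0 * M 2 1 - M 1 1 * M 2 0 := by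
      rw [adjugate_fin_three]; rfl
    have h21 : M.adjugate 2 1 = -(M 0 0 * M 2 1) + M 0 1 * M 2 0 := by
      rw [adjugate_fin_three]; rfl
    have h22 : M.adjugate 2 2 = M 0 0 * M 1 1 - M 0 1 * M 1 0 := by
      rw [adjugate_fin_three]; rfl
    rw [Set.mem_setOf_eq, e]
    refine ⟨⟨?_, ?_, ?_⟩, ?_, ?_, ?_, ?_⟩
    · rw [h10, hA10, hA20]; ring
    · rw [h20, hA10, hA20]; ring
    · rw [h21, hA20, hA21]; ring
    · intro k
      fin_cases k
      · show M.adjugate 0 0 = 1 ∨ M.adjugate 0 0 = -1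
        rw [h00, hA21, mul_zero, sub_zero]
        rcases hAd 1 with h | h <;> rcases hAd 2 with h' | h' <;> simp [h, h']
      · show M.adjugate 1 1 = 1 ∨ M.adjugate 1 1 = -1
        rw [h11, hA20, mul_zero, sub_zero]
        rcases hAd 0 with h | h <;> rcases hAd 2 with h' | h' <;> simp [h, h']
      · show M.adjugate 2 2 = 1 ∨ M.adjugate 2 2 = -1
        rw [h22, hA10, mul_zero, sub_zero]
        rcases hAd 0 with h | h <;> rcases hAd 1 with h' | h' <;> simp [h, h']
    · rw [h01, hA21, mul_zero, add_zero, degree_neg]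
      exact degMulLeR (hAd 2) hAu
    · rw [h12, hA10, mul_zero, add_zero, degree_neg]
      exact degMulLeL (hAd 0) hAv
    · rw [h02]
      refine le_trans (degree_sub_le _ _) (max_le ?_ (degMulLeR (hAd 1) hAw))
      calc (M 0 1 * M 1 2).degree ≤ _ + _ := degree_mul_le _ _
        _ ≤ ((i - j : ℕ) : WithBot ℕ) + (j : ℕ) := add_le_add hAu hAv
        _ = (i : ℕ) := hsum
end

section
/- The group of matrices [[±1, u, w], [0, ±1, v], [0, 0, ±1]] in SL_3(Z[t]) with deg(u) ≤ k, deg(v) ≤ m, deg(w) ≤ m+k (for fixed nonnegative integers k, m) is finitely generated. -/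
open Matrix Polynomial

namespace Stmt3Aux

abbrev SL3 := Matrix.SpecialLinearGroup (Fin 3) (Polynomial ℤ)

noncomputable def Tv (i j : Fin 3) (h : i ≠ j) (c : Polynomial ℤ) : SL3 :=
  ⟨Matrix.transvection i j c, Matrix.det_transvection_of_ne i j h c⟩

lemma Tv_coe (i j : Fin 3) (h : i ≠ j) (c : Polynomial ℤ) :
    ((Tv i j h c : SL3) : Matrix (Fin 3) (Fin 3) (Polynomial ℤ)) = Matrix.transvection i j c :=
  rfl

lemma Tv_mul (i j : Fin 3) (h : i ≠ j) (c d : Polynomial ℤ) :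
    Tv i j h c * Tv i j h d = Tv i j h (c + d) := by
  apply Subtype.ext
  exact Matrix.transvection_mul_transvection_same i j h c d

lemma Tv_zero (i j : Fin 3) (h : i ≠ j) : Tv i j h 0 = 1 := by
  apply Subtype.ext
  simpa [Tv] using Matrix.transvection_zero

noncomputable def Dg (a b : Polynomial ℤ) (ha : a * a = 1) (hb : b * b = 1) : SL3 :=
  ⟨Matrix.diagonal ![a, b, a * b], by
    simp only [Matrix.det_diagonal, Fin.prod_univ_three]
    simp only [Matrix.cons_val_zero, Matrix.cons_val_one, Matrix.head_cons,
      Matrix.cons_val_two, Matrix.tail_cons]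
    linear_combination (b * b) * ha + hb⟩

lemma tv_mem_closure {i j : Fin 3} (h : i ≠ j) {n : ℕ} {S : Set SL3}
    (hS : ∀ a : ℕ, a ≤ n → Tv i j h (X ^ a) ∈ S) {p : Polynomial ℤ}
    (hp : p.degree ≤ (n : ℕ)) : Tv i j h p ∈ Subgroup.closure S := by
  have hmem : p ∈ AddSubgroup.closure {q : Polynomial ℤ | ∃ a ≤ n, q = X ^ a} := by
    have hd : p.natDegree < n + 1 := Nat.lt_succ_of_le (natDegree_le_iff_degree_le.2 hp)
    rw [p.as_sum_range' (n + 1) hd]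
    refine AddSubgroup.sum_mem _ fun a ha => ?_
    rw [← C_mul_X_pow_eq_monomial, ← smul_eq_C_mul]
    have hx : (X : Polynomial ℤ) ^ a ∈ {q : Polynomial ℤ | ∃ b ≤ n, q = X ^ b} :=
      ⟨a, Nat.lt_succ_iff.mp (Finset.mem_range.mp ha), rfl⟩
    exact AddSubgroup.zsmul_mem _ (AddSubgroup.subset_closure hx) _
  refine AddSubgroup.closure_induction (fun q hq => ?_) ?_ (fun x y _ _ px py => ?_)
    (fun x _ px => ?_) hmem
  · obtain ⟨a, ha, rfl⟩ := hq
    exact Subgroup.subset_closure (hS a ha)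
  · rw [Tv_zero]; exact one_mem _
  · rw [← Tv_mul]; exact mul_mem px py
  · have : Tv i j h (-x) = (Tv i j h x)⁻¹ := by
      apply eq_inv_of_mul_eq_one_left
      rw [Tv_mul, neg_add_cancel, Tv_zero]
    rw [this]; exact inv_mem px

lemma decomp (A : SL3) (e0 e1 : Polynomial ℤ) (u0 : e0 * e0 = 1) (u1 : e1 * e1 = 1)
    (h10 : (A : Matrix (Fin 3) (Fin 3) (Polynomial ℤ)) 1 0 = 0)
    (h20 : (A : Matrix (Fin 3) (Fin 3) (Polynomial ℤ)) 2 0 = 0)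
    (h21 : (A : Matrix (Fin 3) (Fin 3) (Polynomial ℤ)) 2 1 = 0)
    (he0 : (A : Matrix (Fin 3) (Fin 3) (Polynomial ℤ)) 0 0 = e0)
    (he1 : (A : Matrix (Fin 3) (Fin 3) (Polynomial ℤ)) 1 1 = e1)
    (he2 : (A : Matrix (Fin 3) (Fin 3) (Polynomial ℤ)) 2 2 = e0 * e1) :
    A = Dg e0 e1 u0 u1
        * Tv 0 1 (by decide) (e0 * (A : Matrix (Fin 3) (Fin 3) (Polynomial ℤ)) 0 1)
        * Tv 1 2 (by decide) (e1 * (A : Matrix (Fin 3) (Fin 3) (Polynomial ℤ)) 1 2)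
        * Tv 0 2 (by decide) (e0 * (A : Matrix (Fin 3) (Fin 3) (Polynomial ℤ)) 0 2
            - e0 * e1 * ((A : Matrix (Fin 3) (Fin 3) (Polynomial ℤ)) 0 1
              * (A : Matrix (Fin 3) (Fin 3) (Polynomial ℤ)) 1 2)) := by
  apply Subtype.ext
  rw [Matrix.SpecialLinearGroup.coe_mul, Matrix.SpecialLinearGroup.coe_mul, Matrix.SpecialLinearGroup.coe_mul]
  simp only [Tv_coe, Dg]
  refine Matrix.ext fun i j => ?_
  fin_cases i <;> fin_cases j <;>
    simp only [Matrix.mul_apply, Fin.sum_univ_three, Matrix.transvection, Matrix.single,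
      Matrix.one_apply, Matrix.diagonal, Matrix.add_apply, Matrix.of_apply, Matrix.cons_val',
      h10, h20, h21, he0, he1, he2] <;>
    simp [h10, h20, h21, he0, he1, he2] <;>
    (try (ring_nf; simp [show e0 ^ 2 = 1 by rw [sq, u0], show e1 ^ 2 = 1 by rw [sq, u1]]))

lemma Tv_apply (i j : Fin 3) (h : i ≠ j) (c : Polynomial ℤ) (a b : Fin 3) :
    (Tv i j h c : Matrix (Fin 3) (Fin 3) (Polynomial ℤ)) a b
      = (if a = b then 1 else 0) + (if i = a ∧ j = b then c else 0) := by
  simp [Tv_coe, Matrix.transvection, Matrix.single, Matrix.one_apply, Matrix.add_apply]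

lemma Dg_apply (e0 e1 : Polynomial ℤ) (u0 : e0 * e0 = 1) (u1 : e1 * e1 = 1) (a b : Fin 3) :
    (Dg e0 e1 u0 u1 : Matrix (Fin 3) (Fin 3) (Polynomial ℤ)) a b
      = if a = b then (![e0, e1, e0 * e1] : Fin 3 → Polynomial ℤ) a else 0 := by
  simp [Dg, Matrix.diagonal]

lemma deg_unit {e : Polynomial ℤ} (he : e * e = 1) : e.degree ≤ 0 :=
  le_of_eq (degree_eq_zero_of_isUnit (IsUnit.of_mul_eq_one _ he))

end Stmt3Aux

open Stmt3Aux

/-- the group of matrices `[[±1, u, w], [0, ±1, v], [0, 0, ±1]]` in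
`SL₃(ℤ[t])` with `deg u ≤ k`, `deg v ≤ m`, `deg w ≤ m + k` is finitely
generated. -/
theorem stmt3 (k m : ℕ)
    (H : Subgroup (Matrix.SpecialLinearGroup (Fin 3) (Polynomial ℤ)))
    (hH : ∀ A : Matrix.SpecialLinearGroup (Fin 3) (Polynomial ℤ),
      A ∈ H ↔
        ((A : Matrix (Fin 3) (Fin 3) (Polynomial ℤ)) 1 0 = 0 ∧
         (A : Matrix (Fin 3) (Fin 3) (Polynomial ℤ)) 2 0 = 0 ∧
         (A : Matrix (Fin 3) (Fin 3) (Polynomial ℤ)) 2 1 = 0) ∧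
        (∀ l : Fin 3, (A : Matrix (Fin 3) (Fin 3) (Polynomial ℤ)) l l = 1 ∨
           (A : Matrix (Fin 3) (Fin 3) (Polynomial ℤ)) l l = -1) ∧
        ((A : Matrix (Fin 3) (Fin 3) (Polynomial ℤ)) 0 1).degree ≤ (k : ℕ) ∧
        ((A : Matrix (Fin 3) (Fin 3) (Polynomial ℤ)) 1 2).degree ≤ (m : ℕ) ∧
        ((A : Matrix (Fin 3) (Fin 3) (Polynomial ℤ)) 0 2).degree ≤ ((m + k : ℕ)) ) :
    H.FG := by
  classical
  have h01 : (0 : Fin 3) ≠ 1 := by decide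
  have h12 : (1 : Fin 3) ≠ 2 := by decide
  have h02 : (0 : Fin 3) ≠ 2 := by decide
  have p1 : (1 : Polynomial ℤ) * 1 = 1 := one_mul 1
  have pm : (-1 : Polynomial ℤ) * -1 = 1 := by norm_num
  set S : Set SL3 :=
    ((fun a => Tv 0 1 h01 (X ^ a)) '' Set.Iic k) ∪
    ((fun b => Tv 1 2 h12 (X ^ b)) '' Set.Iic m) ∪
    ((fun c => Tv 0 2 h02 (X ^ c)) '' Set.Iic (m + k)) ∪
    {Dg 1 1 p1 p1, Dg 1 (-1) p1 pm, Dg (-1) 1 pm p1, Dg (-1) (-1) pm pm} with hSdef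
  have hT1 : ∀ a : ℕ, a ≤ k → Tv 0 1 h01 (X ^ a) ∈ S :=
    fun a ha => Or.inl (Or.inl (Or.inl ⟨a, ha, rfl⟩))
  have hT2 : ∀ b : ℕ, b ≤ m → Tv 1 2 h12 (X ^ b) ∈ S :=
    fun b hb => Or.inl (Or.inl (Or.inr ⟨b, hb, rfl⟩))
  have hT3 : ∀ c : ℕ, c ≤ m + k → Tv 0 2 h02 (X ^ c) ∈ S :=
    fun c hc => Or.inl (Or.inr ⟨c, hc, rfl⟩)
  rw [Subgroup.fg_iff]
  refine ⟨S, le_antisymm ?_ ?_, ?_⟩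
  · rw [Subgroup.closure_le]
    rintro x (((⟨a, ha, rfl⟩ | ⟨b, hb, rfl⟩) | ⟨c, hc, rfl⟩) |
      (rfl | rfl | rfl | rfl)) <;>
      rw [SetLike.mem_coe, hH] <;>
      refine ⟨⟨?_, ?_, ?_⟩, fun l => ?_, ?_, ?_, ?_⟩ <;>
      first
        | (fin_cases l <;> simp [Tv_apply, Dg_apply] <;> norm_num)
        | (simp [Tv_apply, Dg_apply] <;>
            first
              | exact bot_le
              | (rw [degree_X_pow]; exact_mod_cast Set.mem_Iic.mp ha)
              | (rw [degree_X_pow]; exact_mod_cast Set.mem_Iic.mp hb)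
              | (rw [degree_X_pow]; exact_mod_cast Set.mem_Iic.mp hc)
              | exact Set.mem_Iic.mp ha
              | exact Set.mem_Iic.mp hb
              | exact Set.mem_Iic.mp hc
              | exact_mod_cast Set.mem_Iic.mp ha
              | exact_mod_cast Set.mem_Iic.mp hb
              | exact_mod_cast Set.mem_Iic.mp hc
              | norm_num)
  · intro A hA
    rw [hH] at hA
    obtain ⟨⟨h10, h20, h21⟩, hdiag, hu, hv, hw⟩ := hA
    have hdet : (A : Matrix (Fin 3) (Fin 3) (Polynomial ℤ)) 0 0 *
        ((A : Matrix (Fin 3) (Fin 3) (Polynomial ℤ)) 1 1 *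
          (A : Matrix (Fin 3) (Fin 3) (Polynomial ℤ)) 2 2) = 1 := by
      have hd := A.2
      rw [Matrix.det_fin_three, h10, h20, h21] at hd
      linear_combination hd
    have main : ∀ (e0 e1 : Polynomial ℤ) (u0 : e0 * e0 = 1) (u1 : e1 * e1 = 1),
        Dg e0 e1 u0 u1 ∈ S →
        (A : Matrix (Fin 3) (Fin 3) (Polynomial ℤ)) 0 0 = e0 →
        (A : Matrix (Fin 3) (Fin 3) (Polynomial ℤ)) 1 1 = e1 →
        (A : Matrix (Fin 3) (Fin 3) (Polynomial ℤ)) 2 2 = e0 * e1 →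
        A ∈ Subgroup.closure S := by
      intro e0 e1 u0 u1 hD ha hb hc
      have b1 : (e0 * (A : Matrix (Fin 3) (Fin 3) (Polynomial ℤ)) 0 1).degree ≤ (k : ℕ) :=
        le_trans (degree_mul_le _ _)
          (by simpa using add_le_add (deg_unit u0) hu)
      have b2 : (e1 * (A : Matrix (Fin 3) (Fin 3) (Polynomial ℤ)) 1 2).degree ≤ (m : ℕ) :=
        le_trans (degree_mul_le _ _)
          (by simpa using add_le_add (deg_unit u1) hv)
      have b3 : (e0 * (A : Matrix (Fin 3) (Fin 3) (Polynomial ℤ)) 0 2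
          - e0 * e1 * ((A : Matrix (Fin 3) (Fin 3) (Polynomial ℤ)) 0 1
            * (A : Matrix (Fin 3) (Fin 3) (Polynomial ℤ)) 1 2)).degree ≤ ((m + k : ℕ) : WithBot ℕ) := by
        refine le_trans (degree_sub_le _ _) (max_le ?_ ?_)
        · exact le_trans (degree_mul_le _ _) (by simpa using add_le_add (deg_unit u0) hw)
        · refine le_trans (degree_mul_le _ _) ?_
          have hq : ((A : Matrix (Fin 3) (Fin 3) (Polynomial ℤ)) 0 1
              * (A : Matrix (Fin 3) (Fin 3) (Polynomial ℤ)) 1 2).degree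
              ≤ ((k : ℕ) : WithBot ℕ) + ((m : ℕ) : WithBot ℕ) :=
            le_trans (degree_mul_le _ _) (add_le_add hu hv)
          have he : (e0 * e1).degree ≤ 0 :=
            le_trans (degree_mul_le _ _) (by simpa using add_le_add (deg_unit u0) (deg_unit u1))
          calc (e0 * e1).degree + ((A : Matrix (Fin 3) (Fin 3) (Polynomial ℤ)) 0 1
              * (A : Matrix (Fin 3) (Fin 3) (Polynomial ℤ)) 1 2).degree
              ≤ 0 + (((k : ℕ) : WithBot ℕ) + ((m : ℕ) : WithBot ℕ)) := add_le_add he hq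
            _ = ((m + k : ℕ) : WithBot ℕ) := by
                rw [zero_add, ← Nat.cast_add, Nat.add_comm]
      rw [decomp A e0 e1 u0 u1 h10 h20 h21 ha hb hc]
      exact mul_mem (mul_mem (mul_mem (Subgroup.subset_closure hD)
        (tv_mem_closure h01 hT1 b1)) (tv_mem_closure h12 hT2 b2))
        (tv_mem_closure h02 hT3 b3)
    rcases hdiag 0 with ha | ha <;> rcases hdiag 1 with hb | hb
    · refine main 1 1 p1 p1 (Or.inr (Set.mem_insert _ _)) ha hb ?_
      rw [ha, hb] at hdet; linear_combination hdet
    · refine main 1 (-1) p1 pm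
        (Or.inr (Set.mem_insert_of_mem _ (Set.mem_insert _ _))) ha hb ?_
      rw [ha, hb] at hdet; linear_combination -hdet
    · refine main (-1) 1 pm p1
        (Or.inr (Set.mem_insert_of_mem _ (Set.mem_insert_of_mem _ (Set.mem_insert _ _)))) ha hb ?_
      rw [ha, hb] at hdet; linear_combination -hdet
    · refine main (-1) (-1) pm pm
        (Or.inr (Set.mem_insert_of_mem _ (Set.mem_insert_of_mem _ (Set.mem_insert_of_mem _ rfl)))) ha hb ?_
      rw [ha, hb] at hdet; linear_combination hdet
  · refine (((((Set.finite_Iic k).image _).union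
      ((Set.finite_Iic m).image _)).union
      ((Set.finite_Iic (m + k)).image _)).union ?_)
    exact (((Set.finite_singleton _).insert _).insert _).insert _
end
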